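/- Let H be a complex Hilbert space and let P₁, P₂ ∈ Σ⁺(H) be positive operators. Then the operator I + P₁P₂ is boundedly invertible in ℒ(H), and its inverse satisfies ‖(I + P₁P₂)⁻¹‖ ≤ 1 + ‖P₁‖‖P₂‖. -/

import Mathlib

open ContinuousLinearMap RCLike
open scoped InnerProductSpace NNReal

set_option synthInstance.maxHeartbeats 1000000 in

private lemma norm_sq_apply_le {H : Type*} [NormedAddCommGroup H] [InnerProductSpace ℂ H]
    [CompleteSpace H] (P : H →L[ℂ] H) (hP : P.IsPositive) (x : H) :
    ‖P x‖ ^ 2 ≤ ‖P‖ * re ⟪P x, x⟫_ℂ := by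
  have hP' : (0 : H →L[ℂ] H) ≤ P := (nonneg_iff_isPositive P).mpr hP
  set S := CFC.sqrt P with hSdef
  have hS : (0 : H →L[ℂ] H) ≤ S := CFC.sqrt_nonneg (a := P)
  have hSS : S * S = P := CFC.sqrt_mul_sqrt_self P hP'
  have hSa : IsSelfAdjoint S := ((nonneg_iff_isPositive S).mp hS).isSelfAdjoint
  have hnorm : ‖P‖ = ‖S‖ * ‖S‖ := by
    conv_lhs => rw [← hSS]
    nth_rewrite 1 [← hSa.star_eq]
    exact CStarRing.norm_star_mul_self
  have hinner : re ⟪P x, x⟫_ℂ = ‖S x‖ ^ 2 := by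
    have h1 : P x = S (S x) := by rw [← hSS]; rfl
    have h2 : ⟪S (S x), x⟫_ℂ = ⟪S x, S x⟫_ℂ := by
      nth_rewrite 1 [← hSa.adjoint_eq]
      exact adjoint_inner_left S x (S x)
    rw [h1, h2, inner_self_eq_norm_sq]
  have hPapp : ‖P x‖ ≤ ‖S‖ * ‖S x‖ := by
    have : P x = S (S x) := by rw [← hSS]; rfl
    rw [this]; exact le_opNorm S (S x)
  calc ‖P x‖ ^ 2 ≤ (‖S‖ * ‖S x‖) ^ 2 := by
        exact pow_le_pow_left₀ (norm_nonneg _) hPapp 2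
    _ = ‖P‖ * re ⟪P x, x⟫_ℂ := by rw [hnorm, hinner]; ring

private lemma key_estimate {H : Type*} [NormedAddCommGroup H] [InnerProductSpace ℂ H]
    [CompleteSpace H] (P₁ P₂ : H →L[ℂ] H) (h₁ : P₁.IsPositive) (h₂ : P₂.IsPositive) (x : H) :
    ‖x‖ ≤ (1 + ‖P₁‖ * ‖P₂‖) * ‖(1 + P₁ * P₂) x‖ := by
  set y := (1 + P₁ * P₂) x with hy
  have hyx : y = x + P₁ (P₂ x) := by simp [hy, mul_apply]
  have h2x : ‖P₂ x‖ ≤ ‖P₂‖ * ‖y‖ := by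
    have hsq : ‖P₂ x‖ ^ 2 ≤ ‖P₂‖ * (‖P₂ x‖ * ‖y‖) := by
      calc ‖P₂ x‖ ^ 2 ≤ ‖P₂‖ * re ⟪P₂ x, x⟫_ℂ := norm_sq_apply_le P₂ h₂ x
        _ ≤ ‖P₂‖ * re ⟪P₂ x, y⟫_ℂ := by
            apply mul_le_mul_of_nonneg_left _ (norm_nonneg _)
            rw [hyx, inner_add_right, map_add]
            have := (RCLike.nonneg_iff.mp (h₁.inner_nonneg_right (P₂ x))).1
            linarith
        _ ≤ ‖P₂‖ * (‖P₂ x‖ * ‖y‖) := by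
            apply mul_le_mul_of_nonneg_left _ (norm_nonneg _)
            exact (re_le_norm _).trans (norm_inner_le_norm _ _)
    rcases eq_or_lt_of_le (norm_nonneg (P₂ x)) with h0 | h0
    · rw [← h0]; positivity
    · have := hsq
      rw [sq] at this
      nlinarith [norm_nonneg P₂, norm_nonneg y]
  have hx : x = y - P₁ (P₂ x) := by rw [hyx]; abel
  calc ‖x‖ = ‖y - P₁ (P₂ x)‖ := by rw [← hx]
    _ ≤ ‖y‖ + ‖P₁ (P₂ x)‖ := norm_sub_le _ _
    _ ≤ ‖y‖ + ‖P₁‖ * (‖P₂‖ * ‖y‖) := by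
        have := (le_opNorm P₁ (P₂ x)).trans
          (mul_le_mul_of_nonneg_left h2x (norm_nonneg P₁))
        linarith
    _ = (1 + ‖P₁‖ * ‖P₂‖) * ‖y‖ := by ring

/-- For positive operators `P₁, P₂` on a complex Hilbert space `H`,
the operator `I + P₁P₂` is boundedly invertible and
`‖(I + P₁P₂)⁻¹‖ ≤ 1 + ‖P₁‖‖P₂‖`. -/
theorem stmt_0 {H : Type*} [NormedAddCommGroup H] [InnerProductSpace ℂ H] [CompleteSpace H]
    (P₁ P₂ : H →L[ℂ] H) (h₁ : P₁.IsPositive) (h₂ : P₂.IsPositive) :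
    IsUnit (1 + P₁ * P₂) ∧
      ‖Ring.inverse (1 + P₁ * P₂)‖ ≤ 1 + ‖P₁‖ * ‖P₂‖ := by
  set C : ℝ := 1 + ‖P₁‖ * ‖P₂‖ with hC
  have hC0 : 0 < C := by positivity
  set T : H →L[ℂ] H := 1 + P₁ * P₂ with hT
  have hB : ∀ x, ‖x‖ ≤ C * ‖T x‖ := fun x => key_estimate P₁ P₂ h₁ h₂ x
  have hstar : star T = 1 + P₂ * P₁ := by
    rw [hT, star_add, star_one, star_mul, h₁.isSelfAdjoint.star_eq, h₂.isSelfAdjoint.star_eq]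
  have hB' : ∀ x, ‖x‖ ≤ C * ‖(1 + P₂ * P₁) x‖ := by
    intro x
    have := key_estimate P₂ P₁ h₂ h₁ x
    rwa [mul_comm ‖P₂‖ ‖P₁‖] at this
  have hanti : AntilipschitzWith ⟨C, hC0.le⟩ T :=
    T.antilipschitz_of_bound fun x => hB x
  have hunit : IsUnit T := by
    rw [isUnit_iff_bijective, bijective_iff_dense_range_and_antilipschitz]
    refine ⟨?_, ⟨_, hanti⟩⟩
    rw [Submodule.topologicalClosure_eq_top_iff, Submodule.eq_bot_iff]
    intro x hx
    have hTx : ∀ u, ⟪T u, x⟫_ℂ = 0 := fun u =>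
      hx (T u) (LinearMap.mem_range.mpr ⟨u, rfl⟩)
    have hadj : ContinuousLinearMap.adjoint T x = 0 := by
      have h0 : ⟪ContinuousLinearMap.adjoint T x, ContinuousLinearMap.adjoint T x⟫_ℂ = 0 := by
        rw [adjoint_inner_right]
        exact hTx _
      exact inner_self_eq_zero.mp h0
    have hadj' : (1 + P₂ * P₁) x = 0 := by
      rw [← hstar]; exact hadj
    have := hB' x
    rw [hadj'] at this
    simpa using le_antisymm (by simpa using this) (norm_nonneg x)
  refine ⟨hunit, ?_⟩
  apply opNorm_le_bound _ hC0.le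
  intro y
  have hTy : T (Ring.inverse T y) = y := by
    have h1 : T * Ring.inverse T = 1 := Ring.mul_inverse_cancel T hunit
    have := congrArg (fun f : H →L[ℂ] H => f y) h1
    simpa [mul_apply] using this
  calc ‖Ring.inverse T y‖ ≤ C * ‖T (Ring.inverse T y)‖ := hB _
    _ = C * ‖y‖ := by rw [hTy]
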